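/- For every POVM M and every level m ≥ 2 of the hierarchy, H_m(M) ≥ t(M), i.e., the hierarchy value upper-bounds the critical visibility: if Φ_t(M) is projectively simulable, then t is feasible for H_m(M). -/

import Mathlib

open Matrix BigOperators ComplexOrder

noncomputable section

/-- A POVM: positive semidefinite effects summing to the identity. -/
def IsPOVM (d n : ℕ) (M : Fin n → Matrix (Fin d) (Fin d) ℂ) : Prop :=
  (∀ i, (M i).PosSemidef) ∧ ∑ i, M i = 1

/-- The depolarizing noise map `Φ_t(X) = t X + (1-t) (Tr X / d) I`. -/
def depol (d : ℕ) (t : ℝ) (X : Matrix (Fin d) (Fin d) ℂ) : Matrix (Fin d) (Fin d) ℂ :=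
  (t : ℂ) • X + ((1 - t : ℝ) : ℂ) • ((X.trace / (d : ℂ)) • (1 : Matrix (Fin d) (Fin d) ℂ))

/-- Tensor product of `m` matrices, as a matrix on `(ℂ^d)^{⊗m}`. -/
def tensorPow (d m : ℕ) (Q : Fin m → Matrix (Fin d) (Fin d) ℂ) :
    Matrix (Fin m → Fin d) (Fin m → Fin d) ℂ :=
  fun f g => ∏ a, Q a (f a) (g a)

/-- The permutation operator `V_σ` on `(ℂ^d)^{⊗m}`. -/
def permOp (m d : ℕ) (σ : Equiv.Perm (Fin m)) :
    Matrix (Fin m → Fin d) (Fin m → Fin d) ℂ :=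
  fun f g => if f = g ∘ σ.symm then 1 else 0

/-- Partial trace over the tensor factor `b` of an `m`-partite matrix. -/
def ptraceAt (m d : ℕ) (b : Fin m)
    (M : Matrix (Fin m → Fin d) (Fin m → Fin d) ℂ) :
    Matrix ({a : Fin m // a ≠ b} → Fin d) ({a : Fin m // a ≠ b} → Fin d) ℂ :=
  fun f g => ∑ k : Fin d,
    M (fun a => if h : a = b then k else f ⟨a, h⟩)
      (fun a => if h : a = b then k else g ⟨a, h⟩)

/-- Feasibility of visibility `t` at level `m` of the SDP hierarchy: there exist positive
semidefinite operators `R_{i₁…i_m}` with the correct marginals of `Φ_t(M)` in each slot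
and vanishing swapped partial traces whenever the swapped indices differ. -/
def Feasible (d n m : ℕ) (M : Fin n → Matrix (Fin d) (Fin d) ℂ) (t : ℝ) : Prop :=
  ∃ R : (Fin m → Fin n) → Matrix (Fin m → Fin d) (Fin m → Fin d) ℂ,
    (∀ ι, (R ι).PosSemidef) ∧
    (∀ (j : Fin m) (v : Fin n),
      ∑ ι ∈ Finset.univ.filter (fun ι : Fin m → Fin n => ι j = v), R ι =
        tensorPow d m (fun a => if a = j then depol d t (M v) else 1)) ∧
    (∀ (a b : Fin m) (ι : Fin m → Fin n), a ≠ b → ι a ≠ ι b →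
      ptraceAt m d b (permOp m d (Equiv.swap a b) * R ι) = 0)

/-- The value `H_m(M)` of the level-`m` SDP. (copy) -/
def Hval (d n m : ℕ) (M : Fin n → Matrix (Fin d) (Fin d) ℂ) : ℝ :=
  sSup {t : ℝ | 0 ≤ t ∧ t ≤ 1 ∧ Feasible d n m M t}


/-- A projective measurement. -/
def IsProjMeas (d n : ℕ) (P : Fin n → Matrix (Fin d) (Fin d) ℂ) : Prop :=
  (∀ i, (P i)ᴴ = P i) ∧
  (∀ i j, P i * P j = if i = j then P i else 0) ∧
  ∑ i, P i = 1

/-- Projective simulability. -/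
def Simulable (d n : ℕ) (M : Fin n → Matrix (Fin d) (Fin d) ℂ) : Prop :=
  ∃ (N : ℕ) (p : Fin N → ℝ) (P : Fin N → Fin n → Matrix (Fin d) (Fin d) ℂ),
    (∀ k, 0 ≤ p k) ∧ (∑ k, p k = 1) ∧ (∀ k, IsProjMeas d n (P k)) ∧
    (∀ i, M i = ∑ k, (p k : ℂ) • P k i)

lemma tensorPow_mul (d m : ℕ) (Q Q' : Fin m → Matrix (Fin d) (Fin d) ℂ) :
    tensorPow d m Q * tensorPow d m Q' = tensorPow d m (fun a => Q a * Q' a) := by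
  ext f g
  simp only [tensorPow, Matrix.mul_apply]
  rw [Finset.prod_univ_sum (fun _ => (Finset.univ : Finset (Fin d)))
    (fun a k => Q a (f a) k * Q' a k (g a))]
  simp [Fintype.piFinset_univ, Finset.prod_mul_distrib]

lemma tensorPow_conjTranspose (d m : ℕ) (Q : Fin m → Matrix (Fin d) (Fin d) ℂ) :
    (tensorPow d m Q)ᴴ = tensorPow d m (fun a => (Q a)ᴴ) := by
  ext f g
  simp [tensorPow, Matrix.conjTranspose_apply, map_prod]

lemma psd_smul {α : Type*} [Fintype α] {A : Matrix α α ℂ} (hA : A.PosSemidef)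
    {c : ℝ} (hc : 0 ≤ c) : ((c : ℂ) • A).PosSemidef := by
  refine Matrix.PosSemidef.of_dotProduct_mulVec_nonneg ?_ ?_
  · unfold Matrix.IsHermitian
    rw [Matrix.conjTranspose_smul, hA.1]
    congr 1
    simp
  · intro x
    rw [Matrix.smul_mulVec, dotProduct_smul, smul_eq_mul]
    have h := hA.dotProduct_mulVec_nonneg x
    rw [Complex.le_def] at h ⊢
    simp only [Complex.zero_re, Complex.zero_im] at h ⊢
    constructor
    · simp only [Complex.mul_re, Complex.ofReal_re, Complex.ofReal_im]
      nlinarith [h.1, h.2]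
    · simp only [Complex.mul_im, Complex.ofReal_re, Complex.ofReal_im]
      nlinarith [h.2]

lemma psd_sum {α : Type*} [Fintype α] {ι : Type*} [Fintype ι] (f : ι → Matrix α α ℂ)
    (h : ∀ i, (f i).PosSemidef) : (∑ i, f i).PosSemidef :=
  Finset.sum_induction f _ (fun _ _ ha hb => ha.add hb) Matrix.PosSemidef.zero
    (fun i _ => h i)

lemma tensorPow_psd (d m : ℕ) (Q : Fin m → Matrix (Fin d) (Fin d) ℂ)
    (hherm : ∀ a, (Q a)ᴴ = Q a) (hidem : ∀ a, Q a * Q a = Q a) :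
    (tensorPow d m Q).PosSemidef := by
  have : tensorPow d m Q = (tensorPow d m Q)ᴴ * tensorPow d m Q := by
    have e : (fun a => (Q a)ᴴ * Q a) = Q := by
      funext a; rw [hherm, hidem]
    rw [tensorPow_conjTranspose, tensorPow_mul, e]
  rw [this]
  exact Matrix.posSemidef_conjTranspose_mul_self _

lemma permOp_mul_apply (m d : ℕ) (σ : Equiv.Perm (Fin m))
    (N : Matrix (Fin m → Fin d) (Fin m → Fin d) ℂ) (f g : Fin m → Fin d) :
    (permOp m d σ * N) f g = N (f ∘ σ) g := by
  rw [Matrix.mul_apply]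
  have : ∀ h : Fin m → Fin d, (f = h ∘ σ.symm) ↔ (h = f ∘ σ) := by
    intro h
    constructor
    · intro hf; funext x; simp [hf]
    · intro hh; funext x; simp [hh]
  simp only [permOp, this]
  rw [Finset.sum_eq_single (f ∘ σ)]
  · simp
  · intro h _ hne; simp [hne]
  · intro h; exact absurd (Finset.mem_univ _) h

lemma ptrace_swap_zero (m d : ℕ) (a b : Fin m) (hab : a ≠ b)
    (Q : Fin m → Matrix (Fin d) (Fin d) ℂ) (h0 : Q b * Q a = 0) :
    ptraceAt m d b (permOp m d (Equiv.swap a b) * tensorPow d m Q) = 0 := by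
  funext f g
  show (∑ k : Fin d, _) = (0 : ℂ)
  set s : Finset (Fin m) := (Finset.univ.erase a).erase b with hs
  have hcb : ∀ c ∈ s, c ≠ b := fun c hc => (Finset.mem_erase.1 hc).1
  have hca : ∀ c ∈ s, c ≠ a := fun c hc => (Finset.mem_erase.1 (Finset.mem_erase.1 hc).2).1
  set C : ℂ := ∏ x ∈ s.attach,
    Q x.1 (f ⟨x.1, hcb x.1 x.2⟩) (g ⟨x.1, hcb x.1 x.2⟩) with hC
  have hmem : b ∈ Finset.univ.erase a := Finset.mem_erase.2 ⟨Ne.symm hab, Finset.mem_univ _⟩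
  have key : ∀ k : Fin d,
      (permOp m d (Equiv.swap a b) * tensorPow d m Q)
        (fun c => if h : c = b then k else f ⟨c, h⟩)
        (fun c => if h : c = b then k else g ⟨c, h⟩)
      = Q b (f ⟨a, hab⟩) k * Q a k (g ⟨a, hab⟩) * C := by
    intro k
    rw [permOp_mul_apply]
    set F : Fin m → Fin d := fun c => if h : c = b then k else f ⟨c, h⟩ with hF
    set G : Fin m → Fin d := fun c => if h : c = b then k else g ⟨c, h⟩ with hG
    have hFb : F b = k := by simp [hF]
    have hGb : G b = k := by simp [hG]
    have hFa : F a = f ⟨a, hab⟩ := by simp [hF, hab]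
    have hGa : G a = g ⟨a, hab⟩ := by simp [hG, hab]
    show (∏ c, Q c (F (Equiv.swap a b c)) (G c)) = _
    rw [← Finset.mul_prod_erase Finset.univ _ (Finset.mem_univ a),
      ← Finset.mul_prod_erase _ _ hmem]
    rw [Equiv.swap_apply_left, Equiv.swap_apply_right, hFb, hFa, hGa, hGb]
    have hrest : (∏ c ∈ (Finset.univ.erase a).erase b, Q c (F (Equiv.swap a b c)) (G c)) = C := by
      rw [← hs]
      rw [← Finset.prod_attach s (fun c => Q c (F (Equiv.swap a b c)) (G c)), hC]
      refine Finset.prod_congr rfl (fun x _ => ?_)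
      rw [Equiv.swap_apply_of_ne_of_ne (hca x.1 x.2) (hcb x.1 x.2)]
      have : F x.1 = f ⟨x.1, hcb x.1 x.2⟩ := by simp [hF, hcb x.1 x.2]
      have hGx : G x.1 = g ⟨x.1, hcb x.1 x.2⟩ := by simp [hG, hcb x.1 x.2]
      rw [this, hGx]
    rw [hrest]
    ring
  rw [Finset.sum_congr rfl (fun k _ => key k)]
  rw [← Finset.sum_mul]
  have : (∑ k : Fin d, Q b (f ⟨a, hab⟩) k * Q a k (g ⟨a, hab⟩))
      = (Q b * Q a) (f ⟨a, hab⟩) (g ⟨a, hab⟩) := (Matrix.mul_apply).symm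
  rw [this, h0]
  simp

lemma ptraceAt_sum (m d : ℕ) (b : Fin m) {N : ℕ}
    (A : Fin N → Matrix (Fin m → Fin d) (Fin m → Fin d) ℂ) :
    ptraceAt m d b (∑ k, A k) = ∑ k, ptraceAt m d b (A k) := by
  funext f g
  simp only [ptraceAt, Matrix.sum_apply]
  rw [Finset.sum_comm]

lemma ptraceAt_smul (m d : ℕ) (b : Fin m) (c : ℂ)
    (A : Matrix (Fin m → Fin d) (Fin m → Fin d) ℂ) :
    ptraceAt m d b (c • A) = c • ptraceAt m d b A := by
  funext f g
  simp [ptraceAt, Finset.mul_sum]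

lemma marg_sum (d n m : ℕ) (j : Fin m) (v : Fin n)
    (P : Fin n → Matrix (Fin d) (Fin d) ℂ) (hP : ∑ i, P i = 1) :
    ∑ ι ∈ Finset.univ.filter (fun ι : Fin m → Fin n => ι j = v),
      tensorPow d m (fun a => P (ι a)) =
    tensorPow d m (fun a => if a = j then P v else 1) := by
  funext f g
  set F : Fin m → Fin n → ℂ := fun a i =>
    if a = j then (if i = v then P v (f a) (g a) else 0) else P i (f a) (g a) with hF
  have step1 : ∀ a, ((if a = j then P v else 1) : Matrix (Fin d) (Fin d) ℂ) (f a) (g a)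
      = ∑ i, F a i := by
    intro a
    by_cases h : a = j
    · simp [hF, h, Finset.sum_ite_eq']
    · simp only [hF, if_neg h]
      rw [← Matrix.sum_apply, hP]  -- may need adjusting
  have step3 : ∀ ι : Fin m → Fin n, (∏ a, F a (ι a)) =
      if ι j = v then ∏ a, P (ι a) (f a) (g a) else 0 := by
    intro ι
    by_cases h : ι j = v
    · rw [if_pos h]
      refine Finset.prod_congr rfl (fun a _ => ?_)
      by_cases ha : a = j
      · subst ha; rw [h]; simp [hF]
      · simp [hF, ha]
    · rw [if_neg h]
      refine Finset.prod_eq_zero (Finset.mem_univ j) ?_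
      simp [hF, h]
  show _ = ∏ a, ((if a = j then P v else 1) : Matrix (Fin d) (Fin d) ℂ) (f a) (g a)
  rw [Finset.prod_congr rfl (fun a _ => step1 a),
    Finset.prod_univ_sum (fun _ => (Finset.univ : Finset (Fin n))) F]
  rw [Fintype.piFinset_univ]
  rw [Finset.sum_congr rfl (fun ι _ => step3 ι), Finset.sum_ite, Finset.sum_const_zero,
    add_zero]
  rw [Matrix.sum_apply]
  rfl

lemma smul_tensor_single (d m : ℕ) (j : Fin m) {N : ℕ} (p : Fin N → ℝ)
    (X : Fin N → Matrix (Fin d) (Fin d) ℂ) :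
    ∑ k, (p k : ℂ) • tensorPow d m (fun a => if a = j then X k else 1)
    = tensorPow d m (fun a => if a = j then (∑ k, (p k : ℂ) • X k) else 1) := by
  funext f g
  have entry : ∀ Y : Matrix (Fin d) (Fin d) ℂ,
      tensorPow d m (fun a => if a = j then Y else 1) f g =
      Y (f j) (g j) * ∏ a ∈ Finset.univ.erase j, (1 : Matrix (Fin d) (Fin d) ℂ) (f a) (g a) := by
    intro Y
    show (∏ a, ((if a = j then Y else 1) : Matrix (Fin d) (Fin d) ℂ) (f a) (g a)) = _
    rw [← Finset.mul_prod_erase Finset.univ _ (Finset.mem_univ j)]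
    rw [if_pos rfl]
    congr 1
    refine Finset.prod_congr rfl (fun a ha => ?_)
    rw [if_neg (Finset.mem_erase.1 ha).1]
  rw [Matrix.sum_apply, entry]
  rw [Matrix.sum_apply, Finset.sum_mul]
  refine Finset.sum_congr rfl (fun k _ => ?_)
  rw [Matrix.smul_apply, entry, Matrix.smul_apply, smul_eq_mul, smul_eq_mul, mul_assoc]

/-- The hierarchy upper-bounds the critical visibility: if `Φ_t(M)` is projectively
simulable, then `t` is feasible for `H_m(M)`, and hence `t ≤ H_m(M)`. -/
theorem hierarchy_upper_bounds_visibility (d n m : ℕ) (hm : 2 ≤ m)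
    (M : Fin n → Matrix (Fin d) (Fin d) ℂ) (hM : IsPOVM d n M)
    (t : ℝ) (ht0 : 0 ≤ t) (ht1 : t ≤ 1)
    (hsim : Simulable d n (fun i => depol d t (M i))) :
    Feasible d n m M t ∧ t ≤ Hval d n m M := by
  obtain ⟨N, p, P, hp0, hp1, hproj, hMeq⟩ := hsim
  have hfeas : Feasible d n m M t := by
    refine ⟨fun ι => ∑ k, (p k : ℂ) • tensorPow d m (fun a => P k (ι a)), ?_, ?_, ?_⟩
    · intro ι
      show (∑ k : Fin N, (p k : ℂ) • tensorPow d m (fun a => P k (ι a))).PosSemidef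
      refine psd_sum (fun k : Fin N => (p k : ℂ) • tensorPow d m (fun a => P k (ι a)))
        (fun k => ?_)
      exact psd_smul (tensorPow_psd d m _ (fun a => (hproj k).1 (ι a))
        (fun a => by simpa using (hproj k).2.1 (ι a) (ι a))) (hp0 k)
    · intro j v
      rw [Finset.sum_comm]
      have : ∀ k, ∑ ι ∈ Finset.univ.filter (fun ι : Fin m → Fin n => ι j = v),
          (p k : ℂ) • tensorPow d m (fun a => P k (ι a))
          = (p k : ℂ) • tensorPow d m (fun a => if a = j then P k v else 1) := by
        intro k
        rw [← Finset.smul_sum, marg_sum d n m j v (P k) (hproj k).2.2]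
      rw [Finset.sum_congr rfl (fun k _ => this k), smul_tensor_single,
        show depol d t (M v) = ∑ k, (p k : ℂ) • P k v from hMeq v]
    · intro a b ι hab hij
      rw [Matrix.mul_sum, ptraceAt_sum]
      refine Finset.sum_eq_zero (fun k _ => ?_)
      rw [Matrix.mul_smul, ptraceAt_smul]
      rw [ptrace_swap_zero m d a b hab _ ?_, smul_zero]
      rw [(hproj k).2.1 (ι b) (ι a), if_neg (Ne.symm hij)]
  refine ⟨hfeas, ?_⟩
  apply le_csSup
  · exact ⟨1, fun x hx => hx.2.1⟩
  · exact ⟨ht0, ht1, hfeas⟩
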